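/- Suppose A ⊕ A' = {0,...,R−1} with R ≥ 2. Let μ_A be the unique Borel probability measure satisfying μ_A(E) = (1/#A) Σ_{a∈A} μ_A(R·E − a) for all Borel sets E (the invariant measure of the affine IFS τ_a(x) = (x+a)/R), and similarly μ_{A'}. Then the convolution μ_A ∗ μ_{A'} equals Lebesgue measure restricted to [0,1]. -/

import Mathlib

open MeasureTheory Filter Topology

/-- `A ⊕ A' = {0,…,R−1}`: the sum map `A × A' → {0,…,R−1}` is a bijection. -/
def ComplPair (A A' : Finset ℕ) (R : ℕ) : Prop :=
  (∀ a ∈ A, ∀ a' ∈ A', a + a' < R) ∧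
    ∀ k < R, ∃! p : ℕ × ℕ, p.1 ∈ A ∧ p.2 ∈ A' ∧ p.1 + p.2 = k

set_option linter.unusedSectionVars false
set_option linter.unusedVariables false

lemma clip_sum (m : ℕ) : ∀ y : ℝ, 0 ≤ y → y ≤ m →
    ∑ k ∈ Finset.range m, min (max (y - k) 0) 1 = y := by
  induction m with
  | zero => intro y h0 h1; simp at h1 ⊢; linarith
  | succ n ih =>
    intro y h0 h1
    rw [Finset.sum_range_succ']
    push_cast
    rcases le_or_gt 1 y with hy | hy
    · have := ih (y - 1) (by linarith) (by push_cast at h1 ⊢; linarith)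
      have h2 : min (max (y - 0) 0) 1 = 1 := by
        rw [max_eq_left (by linarith), min_eq_right (by linarith)]
      rw [h2]
      have h3 : ∀ k ∈ Finset.range n, min (max (y - ((k:ℝ) + 1)) 0) 1
          = min (max ((y - 1) - (k:ℝ)) 0) 1 := by
        intro k _; ring_nf
      rw [Finset.sum_congr rfl h3, this]; ring
  
    · have h2 : min (max (y - 0) 0) 1 = y := by
        rw [sub_zero, max_eq_left h0, min_eq_left hy.le]
      rw [h2]
      have h3 : ∀ k ∈ Finset.range n, min (max (y - ((k:ℝ) + 1)) 0) 1 = 0 := by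
        intro k _
        rw [max_eq_right, min_eq_left] <;> [linarith; nlinarith [Nat.cast_nonneg (α := ℝ) k]]
      rw [Finset.sum_congr rfl h3, Finset.sum_const_zero, zero_add]



section Compl
variable {A A' : Finset ℕ} {R : ℕ} (hR : 2 ≤ R) (h : ComplPair A A' R)
include hR h

lemma zero_mem : 0 ∈ A ∧ 0 ∈ A' := by
  obtain ⟨p, ⟨h1, h2, h3⟩, -⟩ := h.2 0 (by omega)
  have e1 : p.1 = 0 := by omega
  have e2 : p.2 = 0 := by omega
  rw [e1] at h1; rw [e2] at h2
  exact ⟨h1, h2⟩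

lemma mem_lt : ∀ a ∈ A, a < R := by
  intro a ha
  have := h.1 a ha 0 (zero_mem hR h).2
  omega

lemma mem_lt' : ∀ a ∈ A', a < R := by
  intro a ha
  have := h.1 0 (zero_mem hR h).1 a ha
  omega

lemma sum_reindex {M : Type*} [AddCommMonoid M] (F : ℕ → M) :
    ∑ a ∈ A, ∑ a' ∈ A', F (a + a') = ∑ k ∈ Finset.range R, F k := by
  rw [← Finset.sum_product']
  apply Finset.sum_bij (i := fun p _ => p.1 + p.2)
  · intro p hp
    simp only [Finset.mem_product] at hp
    exact Finset.mem_range.2 (h.1 p.1 hp.1 p.2 hp.2)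
  · intro p hp q hq hpq
    simp only [Finset.mem_product] at hp hq
    have hlt := h.1 p.1 hp.1 p.2 hp.2
    obtain ⟨w, -, huniq⟩ := h.2 _ hlt
    have e1 := huniq p ⟨hp.1, hp.2, rfl⟩
    have e2 := huniq q ⟨hq.1, hq.2, hpq.symm⟩
    rw [e1, e2]
  · intro k hk
    obtain ⟨p, ⟨m1, m2, m3⟩, -⟩ := h.2 k (Finset.mem_range.1 hk)
    exact ⟨p, Finset.mem_product.2 ⟨m1, m2⟩, m3⟩
  · intro p hp; rfl

lemma card_mul : A.card * A'.card = R := by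
  have : (A ×ˢ A').card = (Finset.range R).card := by
    rw [Finset.card_bij (i := fun p _ => p.1 + p.2)]
    · intro p hp
      simp only [Finset.mem_product] at hp
      exact Finset.mem_range.2 (h.1 p.1 hp.1 p.2 hp.2)
    · intro p hp q hq hpq
      simp only [Finset.mem_product] at hp hq
      have hlt := h.1 p.1 hp.1 p.2 hp.2
      obtain ⟨w, -, huniq⟩ := h.2 _ hlt
      have e1 := huniq p ⟨hp.1, hp.2, rfl⟩
      have e2 := huniq q ⟨hq.1, hq.2, hpq.symm⟩
      rw [e1, e2]
    · intro k hk
      obtain ⟨p, ⟨m1, m2, m3⟩, -⟩ := h.2 k (Finset.mem_range.1 hk)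
      exact ⟨p, Finset.mem_product.2 ⟨m1, m2⟩, m3⟩
  simpa [Finset.card_product] using this

end Compl

lemma conv_Iic (μ ν : Measure ℝ) [SFinite μ] [SFinite ν] (x : ℝ) :
    (μ.conv ν) (Set.Iic x) = ∫⁻ a, ν (Set.Iic (x - a)) ∂μ := by
  rw [Measure.conv, Measure.map_apply (by fun_prop) measurableSet_Iic,
    Measure.prod_apply (by exact measurable_add measurableSet_Iic)]
  congr 1
  ext a
  congr 1
  ext b
  simp [Set.mem_Iic, le_sub_iff_add_le']

lemma cdf_meas (ν : Measure ℝ) : Measurable fun t => ν (Set.Iic t) :=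
  Monotone.measurable (fun _ _ hst => measure_mono (Set.Iic_subset_Iic.2 hst))

lemma self_sim_Iic {B : Finset ℕ} {R : ℕ} (hR : 2 ≤ R) (μ : Measure ℝ)
    (hμ : μ = (B.card : ENNReal)⁻¹ • ∑ a ∈ B, μ.map (fun x : ℝ => (x + a) / R)) (t : ℝ) :
    μ (Set.Iic t) = (B.card : ENNReal)⁻¹ *
      ∑ a ∈ B, μ (Set.Iic ((R:ℝ) * t - a)) := by
  have hRpos : (0:ℝ) < R := by positivity
  conv_lhs => rw [hμ]
  rw [Measure.smul_apply, Measure.finset_sum_apply, smul_eq_mul]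
  congr 1
  apply Finset.sum_congr rfl
  intro a _
  rw [Measure.map_apply (by fun_prop) measurableSet_Iic]
  congr 1
  ext z
  simp only [Set.mem_preimage, Set.mem_Iic]
  rw [div_le_iff₀ hRpos]
  constructor <;> intro <;> nlinarith

lemma conv_eq {A A' : Finset ℕ} {R : ℕ} (hR : 2 ≤ R) (h : ComplPair A A' R)
    (μA μA' : Measure ℝ) [IsProbabilityMeasure μA] [IsProbabilityMeasure μA']
    (hμA : μA = (A.card : ENNReal)⁻¹ • ∑ a ∈ A, μA.map (fun x : ℝ => (x + a) / R))
    (hμA' : μA' = (A'.card : ENNReal)⁻¹ • ∑ a ∈ A', μA'.map (fun x : ℝ => (x + a) / R))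
    (x : ℝ) :
    (μA.conv μA') (Set.Iic x) = (R : ENNReal)⁻¹ *
      ∑ k ∈ Finset.range R, (μA.conv μA') (Set.Iic ((R:ℝ) * x - k)) := by
  set G := fun t => μA' (Set.Iic t) with hGdef
  have hG : Measurable G := cdf_meas μA'
  have key : ∀ t, (μA.conv μA') (Set.Iic t) = ∫⁻ a, G (t - a) ∂μA :=
    fun t => conv_Iic μA μA' t
  have hRpos : (0:ℝ) < R := by positivity
  have hmeas : ∀ c : ℝ, Measurable fun y : ℝ => G (c - y) :=
    fun c => hG.comp (measurable_const.sub measurable_id)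
  calc (μA.conv μA') (Set.Iic x) = ∫⁻ a, G (x - a) ∂μA := key x
    _ = (A.card : ENNReal)⁻¹ * ∑ a ∈ A, ∫⁻ y, G (x - (y + a)/R) ∂μA := by
        conv_lhs => rw [hμA]
        rw [lintegral_smul_measure, lintegral_finset_sum_measure]
        congr 1
        refine Finset.sum_congr rfl fun a _ => ?_
        rw [lintegral_map (hmeas x) (by fun_prop)]
    _ = (A.card : ENNReal)⁻¹ * ∑ a ∈ A, ((A'.card : ENNReal)⁻¹ *
          ∑ a' ∈ A', (μA.conv μA') (Set.Iic ((R:ℝ)*x - ↑(a + a')))) := by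
        congr 1
        refine Finset.sum_congr rfl fun a _ => ?_
        have hpt : ∀ y : ℝ, G (x - (y + a)/R) = (A'.card : ENNReal)⁻¹ *
            ∑ a' ∈ A', G (((R:ℝ)*x - ↑(a + a')) - y) := by
          intro y
          show μA' (Set.Iic (x - (y + a)/R)) = (A'.card : ENNReal)⁻¹ *
            ∑ a' ∈ A', μA' (Set.Iic (((R:ℝ)*x - ↑(a + a')) - y))
          rw [self_sim_Iic hR μA' hμA' (x - (y + a)/R)]
          congr 1
          refine Finset.sum_congr rfl fun a' _ => ?_
          congr 2
          push_cast
          field_simp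
          ring
        simp_rw [hpt]
        rw [lintegral_const_mul _ (Finset.measurable_sum _ (fun a' _ => hmeas _))]
        congr 1
        rw [lintegral_finset_sum _ (fun a' _ => hmeas _)]
        exact Finset.sum_congr rfl fun a' _ => (key _).symm
    _ = ((A.card : ENNReal)⁻¹ * (A'.card : ENNReal)⁻¹) *
          ∑ a ∈ A, ∑ a' ∈ A', (μA.conv μA') (Set.Iic ((R:ℝ)*x - ↑(a + a'))) := by
        conv_rhs => rw [mul_assoc, Finset.mul_sum]
    _ = (R : ENNReal)⁻¹ * ∑ k ∈ Finset.range R, (μA.conv μA') (Set.Iic ((R:ℝ)*x - k)) := by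
        rw [sum_reindex hR h (fun k => (μA.conv μA') (Set.Iic ((R:ℝ)*x - k)))]
        congr 1
        rw [← ENNReal.mul_inv (by simp) (by simp), ← Nat.cast_mul, card_mul hR h]

noncomputable def cdfF (ν : Measure ℝ) (x : ℝ) : ℝ := (ν (Set.Iic x)).toReal

-- real functional equation consequences, assuming cdfF ν is the CDF-like function
section Main
variable {ν : Measure ℝ} [IsProbabilityMeasure ν] {R : ℕ} (hR : 2 ≤ R)
  (Feq : ∀ x : ℝ, ν (Set.Iic x) = (R : ENNReal)⁻¹ *
    ∑ k ∈ Finset.range R, ν (Set.Iic ((R:ℝ) * x - k)))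



include hR Feq

lemma feq_real : ∀ x : ℝ, cdfF ν x = ((R:ℝ))⁻¹ * ∑ k ∈ Finset.range R, cdfF ν ((R:ℝ) * x - k) := by
  intro x
  unfold cdfF
  rw [Feq x, ENNReal.toReal_mul, ENNReal.toReal_inv, ENNReal.toReal_natCast,
    ENNReal.toReal_sum (fun k _ => measure_ne_top ν _)]

omit hR Feq in
lemma f_mono : Monotone (cdfF ν) := fun s t hst =>
  ENNReal.toReal_mono (measure_ne_top ν _) (measure_mono (Set.Iic_subset_Iic.2 hst))

omit hR Feq in
lemma f_nonneg (x : ℝ) : 0 ≤ cdfF ν x := ENNReal.toReal_nonneg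

omit hR Feq in
lemma f_le_one (x : ℝ) : cdfF ν x ≤ 1 := by
  have := prob_le_one (μ := ν) (s := Set.Iic x)
  calc (ν (Set.Iic x)).toReal ≤ (1 : ENNReal).toReal :=
    ENNReal.toReal_mono (by simp) this
  _ = 1 := by simp

lemma f_neg (x : ℝ) (hx : x < 0) : cdfF ν x = 0 := by
  have hRpos : (0:ℝ) < R := by positivity
  have hR1 : (1:ℝ) < R := by exact_mod_cast by omega
  -- step inequality
  have step : ∀ y : ℝ, cdfF ν y ≤ cdfF ν ((R:ℝ) * y) := by
    intro y
    rw [feq_real hR Feq y]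
    have hb : ∀ k ∈ Finset.range R, cdfF ν ((R:ℝ) * y - k) ≤ cdfF ν ((R:ℝ) * y) := by
      intro k _
      exact f_mono (by simp [sub_le_self_iff, Nat.cast_nonneg])
    calc ((R:ℝ))⁻¹ * ∑ k ∈ Finset.range R, cdfF ν ((R:ℝ) * y - k)
        ≤ ((R:ℝ))⁻¹ * ∑ k ∈ Finset.range R, cdfF ν ((R:ℝ) * y) := by
          apply mul_le_mul_of_nonneg_left (Finset.sum_le_sum hb) (by positivity)
      _ = cdfF ν ((R:ℝ) * y) := by
          rw [Finset.sum_const, Finset.card_range, nsmul_eq_mul]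
          field_simp
  have iter : ∀ n : ℕ, cdfF ν x ≤ cdfF ν ((R:ℝ)^n * x) := by
    intro n
    induction n with
    | zero => simp
    | succ n ih =>
      refine ih.trans ?_
      have := step ((R:ℝ)^n * x)
      calc cdfF ν ((R:ℝ)^n * x) ≤ cdfF ν ((R:ℝ) * ((R:ℝ)^n * x)) := this
        _ = cdfF ν ((R:ℝ)^(n+1) * x) := by ring_nf
  -- limit
  have hlim : Tendsto (fun n : ℕ => ν (Set.Iic ((R:ℝ)^n * x))) atTop (𝓝 0) := by
    have hE : (⋂ n : ℕ, Set.Iic ((R:ℝ)^n * x)) = ∅ := by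
      ext z
      simp only [Set.mem_iInter, Set.mem_Iic, Set.mem_empty_iff_false, iff_false, not_forall,
        not_le]
      by_cases hz : z < 0
      · -- find n with R^n * x > z, i.e. R^n < z / x
        obtain ⟨n, hn⟩ := pow_unbounded_of_one_lt (z / x) hR1
        refine ⟨n, ?_⟩
        have := (div_lt_iff_of_neg hx).1 hn
        linarith
      · exact ⟨0, by push_neg at hz; simpa using by nlinarith⟩
    have := tendsto_measure_iInter_atTop (μ := ν)
      (s := fun n : ℕ => Set.Iic ((R:ℝ)^n * x))
      (fun n => (measurableSet_Iic).nullMeasurableSet)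
      (fun m n hmn => Set.Iic_subset_Iic.2 (by
        have h1 : (R:ℝ)^m * x ≥ (R:ℝ)^n * x := by
          apply mul_le_mul_of_nonpos_right (pow_le_pow_right₀ (by linarith) hmn) hx.le
        linarith))
      ⟨0, measure_ne_top _ _⟩
    rwa [hE, measure_empty] at this
  have hlim' : Tendsto (fun n : ℕ => cdfF ν ((R:ℝ)^n * x)) atTop (𝓝 0) := by
    have := (ENNReal.tendsto_toReal (by simp)).comp hlim
    simpa [Function.comp_def, cdfF] using this
  have : cdfF ν x ≤ 0 := ge_of_tendsto hlim' (Eventually.of_forall iter)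
  exact le_antisymm this (f_nonneg x)

lemma f_zero : cdfF ν 0 = 0 := by
  have h0 := feq_real hR Feq 0
  have hsum : ∑ k ∈ Finset.range R, cdfF ν ((R:ℝ) * 0 - k) = cdfF ν 0 := by
    rw [Finset.sum_eq_single_of_mem 0 (Finset.mem_range.2 (by omega))]
    · norm_num
    · intro k _ hk
      apply f_neg hR Feq
      simp only [mul_zero, zero_sub, neg_neg, Left.neg_neg_iff]
      exact_mod_cast Nat.pos_of_ne_zero hk
  rw [hsum] at h0
  have hRpos : (1:ℝ) < R := by exact_mod_cast by omega
  have hRne : (R:ℝ) ≠ 0 := by positivity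
  have h1 : cdfF ν 0 * ((R:ℝ) - 1) = 0 := by
    field_simp at h0
    linarith
  rcases mul_eq_zero.1 h1 with h2 | h2
  · exact h2
  · linarith

lemma f_gt_one (x : ℝ) (hx : 1 < x) : cdfF ν x = 1 := by
  have hRpos : (0:ℝ) < R := by positivity
  have hR1 : (1:ℝ) < R := by exact_mod_cast by omega
  -- step inequality
  have step : ∀ y : ℝ, cdfF ν ((R:ℝ) * y - ((R:ℝ) - 1)) ≤ cdfF ν y := by
    intro y
    rw [feq_real hR Feq y]
    have hb : ∀ k ∈ Finset.range R, cdfF ν ((R:ℝ) * y - ((R:ℝ) - 1)) ≤ cdfF ν ((R:ℝ) * y - k) := by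
      intro k hk
      apply f_mono
      have : (k:ℝ) ≤ (R:ℝ) - 1 := by
        have := Finset.mem_range.1 hk
        have : (k:ℝ) + 1 ≤ R := by exact_mod_cast this
        linarith
      linarith
    calc cdfF ν ((R:ℝ) * y - ((R:ℝ) - 1))
        = ((R:ℝ))⁻¹ * ∑ _k ∈ Finset.range R, cdfF ν ((R:ℝ) * y - ((R:ℝ) - 1)) := by
          rw [Finset.sum_const, Finset.card_range, nsmul_eq_mul]; field_simp
      _ ≤ ((R:ℝ))⁻¹ * ∑ k ∈ Finset.range R, cdfF ν ((R:ℝ) * y - k) :=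
          mul_le_mul_of_nonneg_left (Finset.sum_le_sum hb) (by positivity)
  -- iterates of y ↦ R*y - (R-1) starting at x : R^n (x-1) + 1
  have iter : ∀ n : ℕ, cdfF ν ((R:ℝ)^n * (x - 1) + 1) ≤ cdfF ν x := by
    intro n
    induction n with
    | zero => simp
    | succ n ih =>
      refine le_trans ?_ ih
      have := step ((R:ℝ)^n * (x - 1) + 1)
      calc cdfF ν ((R:ℝ)^(n+1) * (x - 1) + 1)
          = cdfF ν ((R:ℝ) * ((R:ℝ)^n * (x - 1) + 1) - ((R:ℝ) - 1)) := by ring_nf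
        _ ≤ cdfF ν ((R:ℝ)^n * (x - 1) + 1) := this
  -- limit : measures of Iic (R^n (x-1) + 1) tend to ν univ = 1
  have hlim : Tendsto (fun n : ℕ => ν (Set.Iic ((R:ℝ)^n * (x - 1) + 1))) atTop (𝓝 1) := by
    have hE : (⋃ n : ℕ, Set.Iic ((R:ℝ)^n * (x - 1) + 1)) = Set.univ := by
      ext z
      simp only [Set.mem_iUnion, Set.mem_Iic, Set.mem_univ, iff_true]
      rcases le_or_gt z 1 with hz | hz
      · exact ⟨0, by nlinarith⟩
      · obtain ⟨n, hn⟩ := pow_unbounded_of_one_lt ((z - 1) / (x - 1)) hR1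
        refine ⟨n, ?_⟩
        have h2 := (div_lt_iff₀ (by linarith : (0:ℝ) < x - 1)).1 hn
        nlinarith
    have := tendsto_measure_iUnion_atTop (μ := ν)
      (s := fun n : ℕ => Set.Iic ((R:ℝ)^n * (x - 1) + 1))
      (fun m n hmn => Set.Iic_subset_Iic.2 (by
        have : (R:ℝ)^m ≤ (R:ℝ)^n := pow_le_pow_right₀ (by linarith) hmn
        nlinarith))
    rw [hE] at this
    simpa [Function.comp_def] using this
  have hlim' : Tendsto (fun n : ℕ => cdfF ν ((R:ℝ)^n * (x - 1) + 1)) atTop (𝓝 1) := by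
    have := (ENNReal.tendsto_toReal (by simp)).comp hlim
    simpa [cdfF, Function.comp_def] using this
  have h1 : 1 ≤ cdfF ν x := le_of_tendsto hlim' (Eventually.of_forall iter)
  exact le_antisymm (f_le_one x) h1

lemma f_one : cdfF ν 1 = 1 := by
  have hRpos : (0:ℝ) < R := by positivity
  have h0 := feq_real hR Feq 1
  have hsum : ∑ k ∈ Finset.range R, cdfF ν ((R:ℝ) * 1 - k) = cdfF ν 1 + ((R:ℝ) - 1) := by
    obtain ⟨m, rfl⟩ : ∃ m, R = m + 1 := ⟨R - 1, by omega⟩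
    rw [Finset.sum_range_succ]
    have h1 : ∀ k ∈ Finset.range m, cdfF ν (((m:ℝ)+1) * 1 - k) = 1 := by
      intro k hk
      apply f_gt_one hR Feq
      have := Finset.mem_range.1 hk
      have : (k:ℝ) + 1 ≤ m := by exact_mod_cast this
      linarith
    rw [Finset.sum_congr rfl (by exact_mod_cast h1), Finset.sum_const, Finset.card_range,
      nsmul_eq_mul]
    push_cast
    ring_nf
  rw [hsum] at h0
  have hR1 : (1:ℝ) < R := by exact_mod_cast by omega
  have hRne : (R:ℝ) ≠ 0 := by positivity
  have h2 : (cdfF ν 1 - 1) * ((R:ℝ) - 1) = 0 := by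
    field_simp at h0
    linarith
  rcases mul_eq_zero.1 h2 with h3 | h3
  · linarith
  · linarith

lemma f_grid : ∀ n : ℕ, ∀ j : ℕ, j ≤ R^n → cdfF ν ((j:ℝ) / (R:ℝ)^n) = (j:ℝ) / (R:ℝ)^n := by
  intro n
  induction n with
  | zero =>
    intro j hj
    simp only [pow_zero] at hj
    interval_cases j
    · simpa using f_zero hR Feq
    · simpa using f_one hR Feq
  | succ n ih =>
    intro j hj
    have hRpos : (0:ℝ) < R := by positivity
    have hRn : (0:ℝ) < (R:ℝ)^n := by positivity
    have key := feq_real hR Feq ((j:ℝ)/(R:ℝ)^(n+1))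
    have harg : (R:ℝ) * ((j:ℝ)/(R:ℝ)^(n+1)) = (j:ℝ)/(R:ℝ)^n := by
      field_simp
      ring
    rw [harg] at key
    have hterm : ∀ k ∈ Finset.range R,
        cdfF ν ((j:ℝ)/(R:ℝ)^n - k) = min (max ((j:ℝ)/(R:ℝ)^n - k) 0) 1 := by
      intro k hk
      set t := (j:ℝ)/(R:ℝ)^n - k with ht
      rcases lt_or_ge t 0 with h1 | h1
      · rw [f_neg hR Feq t h1, max_eq_right h1.le]
        simp
      rcases le_or_gt 1 t with h2 | h2
      · rw [max_eq_left (by linarith), min_eq_right h2]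
        rcases eq_or_lt_of_le h2 with h3 | h3
        · rw [← h3]; exact f_one hR Feq
        · exact f_gt_one hR Feq t h3
      rcases eq_or_lt_of_le h1 with h0 | h0
      · rw [← h0, max_eq_left le_rfl, min_eq_left (by norm_num)]
        exact f_zero hR Feq
      -- 0 < t < 1
      rw [max_eq_left h1, min_eq_left h2.le]
      have hkj : k * R^n < j := by
        have h4 : (k:ℝ) * (R:ℝ)^n < j := by
          have := h0
          rw [ht] at this
          have := sub_pos.1 this
          calc (k:ℝ) * (R:ℝ)^n < ((j:ℝ)/(R:ℝ)^n) * (R:ℝ)^n :=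
              mul_lt_mul_of_pos_right this hRn
            _ = j := by field_simp
        exact_mod_cast h4
      set m := j - k * R^n with hm
      have hmcast : (m:ℝ) = (j:ℝ) - (k:ℝ) * (R:ℝ)^n := by
        rw [hm]
        push_cast [Nat.cast_sub hkj.le]
        ring
      have htm : t = (m:ℝ)/(R:ℝ)^n := by
        rw [ht, hmcast]
        field_simp
      have hmle : m ≤ R^n := by
        have h5 : (m:ℝ) < (R:ℝ)^n := by
          rw [hmcast]
          have := h2
          rw [ht] at this
          have h6 : (j:ℝ)/(R:ℝ)^n < 1 + k := by linarith
          calc (j:ℝ) - k * (R:ℝ)^n < (1 + k) * (R:ℝ)^n - k * (R:ℝ)^n := by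
                have := (div_lt_iff₀ hRn).1 h6
                linarith
            _ = (R:ℝ)^n := by ring
        have : (m:ℝ) < ((R^n : ℕ) : ℝ) := by push_cast; linarith
        exact_mod_cast this.le
      rw [htm, ih m hmle]
    rw [Finset.sum_congr rfl hterm] at key
    have hjR : (j:ℝ)/(R:ℝ)^n ≤ R := by
      rw [div_le_iff₀ hRn]
      have : (j:ℝ) ≤ ((R^(n+1) : ℕ) : ℝ) := by exact_mod_cast hj
      push_cast at this
      calc (j:ℝ) ≤ (R:ℝ)^(n+1) := this
        _ = (R:ℝ) * (R:ℝ)^n := by ring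
    rw [clip_sum R ((j:ℝ)/(R:ℝ)^n) (by positivity) hjR] at key
    have hfin : (R:ℝ)⁻¹ * ((j:ℝ)/(R:ℝ)^n) = (j:ℝ)/(R:ℝ)^(n+1) := by
      rw [pow_succ, ← div_div, mul_comm, ← div_eq_mul_inv]
    rw [key, hfin]

lemma f_id (x : ℝ) (hx0 : 0 ≤ x) (hx1 : x ≤ 1) : cdfF ν x = x := by
  rcases eq_or_lt_of_le hx1 with rfl | hx1'
  · exact f_one hR Feq
  have hR1 : (1:ℝ) < R := by exact_mod_cast by omega
  have key : ∀ n : ℕ, |cdfF ν x - x| ≤ ((R:ℝ)⁻¹)^n := by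
    intro n
    have hRn : (0:ℝ) < (R:ℝ)^n := by positivity
    set j := ⌊x * (R:ℝ)^n⌋₊ with hj
    have hjle : (j:ℝ) ≤ x * (R:ℝ)^n := Nat.floor_le (by positivity)
    have hjlt : x * (R:ℝ)^n < j + 1 := Nat.lt_floor_add_one _
    have hjR : j + 1 ≤ R^n := by
      have h1 : (j:ℝ) < ((R^n : ℕ) : ℝ) := by
        push_cast
        nlinarith
      have h2 : j < R^n := by exact_mod_cast h1
      omega
    have hlow : (j:ℝ)/(R:ℝ)^n ≤ cdfF ν x := by
      rw [← f_grid hR Feq n j (by omega)]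
      exact f_mono (by rw [div_le_iff₀ hRn]; linarith)
    have hup : cdfF ν x ≤ ((j:ℝ)+1)/(R:ℝ)^n := by
      have := f_grid hR Feq n (j+1) hjR
      push_cast at this
      rw [← this]
      exact f_mono (by rw [le_div_iff₀ hRn]; linarith)
    have hx_low : (j:ℝ)/(R:ℝ)^n ≤ x := by rw [div_le_iff₀ hRn]; linarith
    have hx_up : x ≤ ((j:ℝ)+1)/(R:ℝ)^n := by rw [le_div_iff₀ hRn]; linarith
    have hgap : ((j:ℝ)+1)/(R:ℝ)^n - (j:ℝ)/(R:ℝ)^n = ((R:ℝ)⁻¹)^n := by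
      field_simp
      rw [one_div_pow, mul_one_div_cancel (by positivity)]; ring
    rw [abs_le]
    constructor <;> linarith
  have h0 : Tendsto (fun n : ℕ => ((R:ℝ)⁻¹)^n) atTop (𝓝 0) := by
    apply tendsto_pow_atTop_nhds_zero_of_lt_one (by positivity)
    rw [inv_lt_one_iff₀]
    right
    exact hR1
  have habs : |cdfF ν x - x| ≤ 0 := ge_of_tendsto h0 (Eventually.of_forall key)
  have := abs_nonneg (cdfF ν x - x)
  have h2 : |cdfF ν x - x| = 0 := le_antisymm habs this
  have := abs_eq_zero.1 h2
  linarith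

lemma measure_eq_restrict : ν = volume.restrict (Set.Icc (0:ℝ) 1) := by
  refine Measure.ext_of_Iic ν _ fun a => ?_
  rw [Measure.restrict_apply measurableSet_Iic]
  have hν : ν (Set.Iic a) = ENNReal.ofReal (cdfF ν a) := by
    rw [cdfF, ENNReal.ofReal_toReal (measure_ne_top ν _)]
  rcases lt_or_ge a 0 with ha | ha
  · rw [hν, f_neg hR Feq a ha]
    have he : Set.Iic a ∩ Set.Icc (0:ℝ) 1 = ∅ := by
      ext z
      simp only [Set.mem_inter_iff, Set.mem_Iic, Set.mem_Icc, Set.mem_empty_iff_false, iff_false,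
        not_and, and_imp]
      intros
      linarith
    rw [he]
    simp
  · rcases le_or_gt a 1 with ha1 | ha1
    · rw [hν, f_id hR Feq a ha ha1]
      have he : Set.Iic a ∩ Set.Icc (0:ℝ) 1 = Set.Icc 0 a := by
        ext z
        simp only [Set.mem_inter_iff, Set.mem_Iic, Set.mem_Icc]
        constructor
        · rintro ⟨h1, h2, h3⟩; exact ⟨h2, h1⟩
        · rintro ⟨h1, h2⟩; exact ⟨h2, h1, by linarith⟩
      rw [he, Real.volume_Icc]
      simp
    · rw [hν, f_gt_one hR Feq a ha1]
      have he : Set.Iic a ∩ Set.Icc (0:ℝ) 1 = Set.Icc 0 1 := by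
        ext z
        simp only [Set.mem_inter_iff, Set.mem_Iic, Set.mem_Icc]
        constructor
        · rintro ⟨h1, h2, h3⟩; exact ⟨h2, h3⟩
        · rintro ⟨h1, h2⟩; exact ⟨by linarith, h1, h2⟩
      rw [he, Real.volume_Icc]
      norm_num

end Main


/-- If `A ⊕ A' = {0,…,R−1}` and `μ_A`, `μ_{A'}` are the Hutchinson invariant
measures of the affine IFSs `(R,A)` and `(R,A')`, then
`μ_A ∗ μ_{A'}` is Lebesgue measure restricted to `[0,1]`. -/
theorem stmt7 (A A' : Finset ℕ) (R : ℕ) (hR : 2 ≤ R) (h : ComplPair A A' R)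
    (μA μA' : Measure ℝ) [IsProbabilityMeasure μA] [IsProbabilityMeasure μA']
    (hμA : μA = (A.card : ENNReal)⁻¹ • ∑ a ∈ A, μA.map (fun x : ℝ => (x + a) / R))
    (hμA' : μA' = (A'.card : ENNReal)⁻¹ • ∑ a ∈ A', μA'.map (fun x : ℝ => (x + a) / R)) :
    μA.conv μA' = volume.restrict (Set.Icc (0 : ℝ) 1) :=
  measure_eq_restrict hR (conv_eq hR h μA μA' hμA hμA')
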